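/- Let Y, W : ℝ → ℝ be continuous 2π-periodic functions with ⟨Y, W⟩ = 0, ⟨Y,Y⟩ = V₀ > 0, and ⟨W,W⟩ = S₀ > 0, where ⟨f,g⟩ = (1/(2π))∫₀^{2π} f g. Let P > (Δω)²/V₀. Then the function v_f = (1/(2λ))·W − (Δω/V₀)·Y with λ = −(1/2)·√(S₀/(P − (Δω)²/V₀)) satisfies the constraints ⟨v_f, v_f⟩ = P and ⟨Y, v_f⟩ = −Δω, and among all v satisfying these two constraints it minimizes ⟨W, v⟩ (equivalently maximizes −⟨W, v⟩), with optimal value ⟨W, v_f⟩ = (1/(2λ))·S₀ = −√(S₀(P − (Δω)²/V₀)). -/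

import Mathlib

open MeasureTheory Real

set_option maxHeartbeats 1000000

theorem fast_entrainment_optimality
    (Y W : ℝ → ℝ) (hY : Continuous Y) (hW : Continuous W)
    (hYper : ∀ θ, Y (θ + 2 * π) = Y θ) (hWper : ∀ θ, W (θ + 2 * π) = W θ)
    (V₀ S₀ Δω P : ℝ)
    (horth : (1 / (2 * π)) * ∫ θ in (0:ℝ)..(2 * π), Y θ * W θ = 0)
    (hV₀ : (1 / (2 * π)) * ∫ θ in (0:ℝ)..(2 * π), Y θ * Y θ = V₀)
    (hS₀ : (1 / (2 * π)) * ∫ θ in (0:ℝ)..(2 * π), W θ * W θ = S₀)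
    (hV₀pos : 0 < V₀) (hS₀pos : 0 < S₀)
    (hP : Δω ^ 2 / V₀ < P)
    (lam : ℝ) (hlam2 : lam = -(1 / 2) * Real.sqrt (S₀ / (P - Δω ^ 2 / V₀)))
    (vf : ℝ → ℝ) (hvf : ∀ θ, vf θ = (1 / (2 * lam)) * W θ - (Δω / V₀) * Y θ) :
    ((1 / (2 * π)) * ∫ θ in (0:ℝ)..(2 * π), vf θ * vf θ = P) ∧
    ((1 / (2 * π)) * ∫ θ in (0:ℝ)..(2 * π), Y θ * vf θ = -Δω) ∧
    ((1 / (2 * π)) * ∫ θ in (0:ℝ)..(2 * π), W θ * vf θ = (1 / (2 * lam)) * S₀) ∧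
    ((1 / (2 * lam)) * S₀ = -Real.sqrt (S₀ * (P - Δω ^ 2 / V₀))) ∧
    (∀ v : ℝ → ℝ, Continuous v → (∀ θ, v (θ + 2 * π) = v θ) →
      ((1 / (2 * π)) * ∫ θ in (0:ℝ)..(2 * π), v θ * v θ = P) →
      ((1 / (2 * π)) * ∫ θ in (0:ℝ)..(2 * π), Y θ * v θ = -Δω) →
      (1 / (2 * π)) * ∫ θ in (0:ℝ)..(2 * π), W θ * vf θ ≤
        (1 / (2 * π)) * ∫ θ in (0:ℝ)..(2 * π), W θ * v θ) := by
  have hπ : (0:ℝ) < 2 * π := by positivity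
  have hπ' : (2:ℝ) * π ≠ 0 := ne_of_gt hπ
  set Q : ℝ := P - Δω ^ 2 / V₀ with hQdef
  have hQ : 0 < Q := sub_pos.mpr hP
  set s : ℝ := Real.sqrt (S₀ / Q) with hsdef
  have hs : 0 < s := Real.sqrt_pos.mpr (by positivity)
  have hs2 : s ^ 2 = S₀ / Q := Real.sq_sqrt (by positivity)
  set r : ℝ := Real.sqrt (S₀ * Q) with hrdef
  have hr : 0 < r := Real.sqrt_pos.mpr (by positivity)
  have hr2 : r ^ 2 = S₀ * Q := Real.sq_sqrt (by positivity)
  have hsr : s * r = S₀ := by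
    rw [hsdef, hrdef, ← Real.sqrt_mul (by positivity)]
    rw [show S₀ / Q * (S₀ * Q) = S₀ ^ 2 by field_simp]
    exact Real.sqrt_sq hS₀pos.le
  have hlam : 2 * lam = -s := by rw [hlam2]; ring
  have hlamne : lam ≠ 0 := by
    intro h; rw [h] at hlam; simp at hlam; linarith
  set c : ℝ := 1 / (2 * lam) with hcdef
  have hc : c = -1 / s := by rw [hcdef, hlam]; field_simp
  have hcs : c * s = -1 := by rw [hc]; field_simp
  set d : ℝ := Δω / V₀ with hddef
  have hdV : d * V₀ = Δω := by rw [hddef]; field_simp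
  have hdd : d * d * V₀ = Δω ^ 2 / V₀ := by
    rw [hddef]; field_simp [hV₀pos.ne']
  have hdΔ : d * Δω = Δω ^ 2 / V₀ := by
    rw [hddef]; field_simp [hV₀pos.ne']
  have hsQ : s ^ 2 * Q = S₀ := by rw [hs2]; field_simp
  have hc2S : c * c * S₀ = Q := by
    linear_combination (-(c^2)) * hsQ + (Q*(c*s - 1)) * hcs
  have hcS : c * S₀ = -r := by
    linear_combination (-c) * hsr + r * hcs
  -- integrability
  have hiYW : IntervalIntegrable (fun θ => Y θ * W θ) volume 0 (2*π) :=
    (hY.mul hW).intervalIntegrable _ _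
  have hiYY : IntervalIntegrable (fun θ => Y θ * Y θ) volume 0 (2*π) :=
    (hY.mul hY).intervalIntegrable _ _
  have hiWW : IntervalIntegrable (fun θ => W θ * W θ) volume 0 (2*π) :=
    (hW.mul hW).intervalIntegrable _ _
  -- raw integral values
  have IYW : ∫ θ in (0:ℝ)..(2*π), Y θ * W θ = 0 := by
    have h := horth; field_simp at h; linarith
  have IYY : ∫ θ in (0:ℝ)..(2*π), Y θ * Y θ = 2 * π * V₀ := by
    have h := hV₀; field_simp at h; simp only [sq] at h; linarith
  have IWW : ∫ θ in (0:ℝ)..(2*π), W θ * W θ = 2 * π * S₀ := by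
    have h := hS₀; field_simp at h; simp only [sq] at h; linarith
  -- expansion of ∫ vf·vf
  have e1 : (fun θ => vf θ * vf θ) = (fun θ =>
      (c*c) * (W θ * W θ) - (2*c*d) * (Y θ * W θ) + (d*d) * (Y θ * Y θ)) := by
    funext θ; rw [hvf]; ring
  have Ivv : ∫ θ in (0:ℝ)..(2*π), vf θ * vf θ
      = (c*c) * (2*π*S₀) + (d*d) * (2*π*V₀) := by
    rw [e1, intervalIntegral.integral_add ((hiWW.const_mul _).sub (hiYW.const_mul _))
      (hiYY.const_mul _), intervalIntegral.integral_sub (hiWW.const_mul _) (hiYW.const_mul _),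
      intervalIntegral.integral_const_mul, intervalIntegral.integral_const_mul,
      intervalIntegral.integral_const_mul, IYW, IYY, IWW]
    ring
  have e2 : (fun θ => Y θ * vf θ) = (fun θ =>
      c * (Y θ * W θ) - d * (Y θ * Y θ)) := by
    funext θ; rw [hvf]; ring
  have IYvf : ∫ θ in (0:ℝ)..(2*π), Y θ * vf θ = -d * (2*π*V₀) := by
    rw [e2, intervalIntegral.integral_sub (hiYW.const_mul _) (hiYY.const_mul _),
      intervalIntegral.integral_const_mul, intervalIntegral.integral_const_mul, IYW, IYY]
    ring
  have e3 : (fun θ => W θ * vf θ) = (fun θ =>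
      c * (W θ * W θ) - d * (Y θ * W θ)) := by
    funext θ; rw [hvf]; ring
  have IWvf : ∫ θ in (0:ℝ)..(2*π), W θ * vf θ = c * (2*π*S₀) := by
    rw [e3, intervalIntegral.integral_sub (hiWW.const_mul _) (hiYW.const_mul _),
      intervalIntegral.integral_const_mul, intervalIntegral.integral_const_mul, IYW, IWW]
    ring
  refine ⟨?_, ?_, ?_, ?_, ?_⟩
  · rw [Ivv]
    have h1 : (1 / (2*π)) * ((c*c) * (2*π*S₀) + (d*d) * (2*π*V₀))
        = c*c*S₀ + d*d*V₀ := by field_simp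
    rw [h1, hc2S, hdd, hQdef]; ring
  · rw [IYvf]
    have h1 : (1 / (2*π)) * (-d * (2*π*V₀)) = -(d*V₀) := by field_simp
    rw [h1, hdV]
  · rw [IWvf]
    have h1 : (1 / (2*π)) * (c * (2*π*S₀)) = c*S₀ := by field_simp
    rw [h1, hcdef]
  · exact hcS
  · intro v hv hvper hvP hvY
    have hiWv : IntervalIntegrable (fun θ => W θ * v θ) volume 0 (2*π) :=
      (hW.mul hv).intervalIntegrable _ _
    have hiYv : IntervalIntegrable (fun θ => Y θ * v θ) volume 0 (2*π) :=
      (hY.mul hv).intervalIntegrable _ _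
    have hivv : IntervalIntegrable (fun θ => v θ * v θ) volume 0 (2*π) :=
      (hv.mul hv).intervalIntegrable _ _
    have Ivv2 : ∫ θ in (0:ℝ)..(2*π), v θ * v θ = 2 * π * P := by
      have h := hvP; field_simp at h; simp only [sq] at h; linarith
    have IYv : ∫ θ in (0:ℝ)..(2*π), Y θ * v θ = -(2 * π * Δω) := by
      have h := hvY; field_simp at h; linarith
    set t : ℝ := s with htdef
    set X : ℝ := ∫ θ in (0:ℝ)..(2*π), W θ * v θ with hXdef
    have ht2Q : t * t * Q = S₀ := by rw [htdef]; linear_combination hsQ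
    have htr : t * r = S₀ := by rw [htdef]; exact hsr
    have hQ' : P + d * d * V₀ - 2 * (d * Δω) = Q := by
      rw [hdd, hdΔ, hQdef]; ring
    have hexp : (fun θ => (W θ + t * (v θ + d * Y θ)) ^ 2) = (fun θ =>
        (W θ * W θ) + (t*t) * (v θ * v θ) + (t*t*d*d) * (Y θ * Y θ)
        + (2*t) * (W θ * v θ) + (2*t*d) * (Y θ * W θ) + (2*t*t*d) * (Y θ * v θ)) := by
      funext θ; ring
    have hnn : 0 ≤ ∫ θ in (0:ℝ)..(2*π), (W θ + t * (v θ + d * Y θ)) ^ 2 :=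
      intervalIntegral.integral_nonneg (le_of_lt hπ) (fun u _ => sq_nonneg _)
    rw [hexp] at hnn
    rw [intervalIntegral.integral_add (((((hiWW.add (hivv.const_mul _)).add
        (hiYY.const_mul _)).add (hiWv.const_mul _)).add (hiYW.const_mul _)))
        (hiYv.const_mul _),
      intervalIntegral.integral_add ((((hiWW.add (hivv.const_mul _)).add
        (hiYY.const_mul _)).add (hiWv.const_mul _))) (hiYW.const_mul _),
      intervalIntegral.integral_add (((hiWW.add (hivv.const_mul _)).add
        (hiYY.const_mul _))) (hiWv.const_mul _),
      intervalIntegral.integral_add ((hiWW.add (hivv.const_mul _))) (hiYY.const_mul _),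
      intervalIntegral.integral_add hiWW (hivv.const_mul _),
      intervalIntegral.integral_const_mul, intervalIntegral.integral_const_mul,
      intervalIntegral.integral_const_mul, intervalIntegral.integral_const_mul,
      intervalIntegral.integral_const_mul, IYW, IYY, IWW, Ivv2, IYv, ← hXdef] at hnn
    have hE : 2*π*S₀ + (t*t) * (2*π*P) + (t*t*d*d) * (2*π*V₀) + (2*t) * X
        + (2*t*d) * 0 + (2*t*t*d) * (-(2*π*Δω)) = (2*t) * (2*π*r + X) := by
      linear_combination (2*π*(t*t)) * hQ' + (2*π) * ht2Q + (-(4*π)) * htr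
    rw [hE] at hnn
    have h3 : 0 ≤ 2*π*r + X := nonneg_of_mul_nonneg_right hnn (by positivity)
    rw [IWvf]
    have hval : (1 / (2*π)) * (c * (2*π*S₀)) = -r := by
      rw [show (1 / (2*π)) * (c * (2*π*S₀)) = c*S₀ from by field_simp, hcS]
    rw [hval]
    have hmul := mul_le_mul_of_nonneg_left (show -(2*π*r) ≤ X by linarith only [h3])
      (show (0:ℝ) ≤ 1/(2*π) by positivity)
    have heq : (1/(2*π)) * (-(2*π*r)) = -r := by field_simp
    linarith only [hmul, heq]
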